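/- The function p ↦ exp(φ(s|W,p)) = Tr[(∑_x p(x) W_x^{1/(1-s)})^{1-s}] is concave in the probability distribution p for s ∈ [0,1], and convex for s ∈ [-1,0]. -/

import Mathlib

open Matrix
open scoped ComplexOrder Kronecker

noncomputable def mpow {n : Type*} [Fintype n] [DecidableEq n]
    (A : Matrix n n ℂ) (s : ℝ) : Matrix n n ℂ :=
  cfc (fun x : ℝ => x ^ s) A

noncomputable def mlog {n : Type*} [Fintype n] [DecidableEq n]
    (A : Matrix n n ℂ) : Matrix n n ℂ :=
  cfc Real.log A

section Aux

variable {d : ℕ}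

lemma ustar_mul (U : Matrix.unitaryGroup (Fin d) ℂ) :
    star (U : Matrix (Fin d) (Fin d) ℂ) * (U : Matrix (Fin d) (Fin d) ℂ) = 1 :=
  mem_unitaryGroup_iff'.mp U.2

lemma umul_star (U : Matrix.unitaryGroup (Fin d) ℂ) :
    (U : Matrix (Fin d) (Fin d) ℂ) * star (U : Matrix (Fin d) (Fin d) ℂ) = 1 :=
  mem_unitaryGroup_iff.mp U.2

lemma trace_cfc_eq {A : Matrix (Fin d) (Fin d) ℂ} (hA : A.IsHermitian) (f : ℝ → ℝ) :
    (Matrix.trace (cfc f A)).re = ∑ i, f (hA.eigenvalues i) := by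
  rw [hA.cfc_eq, Matrix.IsHermitian.cfc, Unitary.conjStarAlgAut_apply, Matrix.trace_mul_cycle,
    ustar_mul, one_mul, trace_diagonal]
  simp

lemma conj_diag_entry' (S : Matrix (Fin d) (Fin d) ℂ) (v : Fin d → ℝ) (i : Fin d) :
    ((star S * diagonal ((RCLike.ofReal : ℝ → ℂ) ∘ v) * S) i i).re
      = ∑ j, Complex.normSq (S j i) * v j := by
  rw [mul_assoc, Matrix.mul_apply, Complex.re_sum]
  congr 1; ext j
  rw [Matrix.mul_apply]
  rw [Finset.sum_eq_single j
    (by intro k _ hk; rw [diagonal_apply_ne _ (Ne.symm hk), zero_mul]) (by simp)]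
  simp [Matrix.star_apply, Complex.normSq_apply, Complex.mul_re, Complex.mul_im]
  ring

lemma col_normSq_sum (S : Matrix (Fin d) (Fin d) ℂ) (hS : star S * S = 1) (i : Fin d) :
    ∑ j, Complex.normSq (S j i) = 1 := by
  have h := congrArg (fun M : Matrix (Fin d) (Fin d) ℂ => (M i i).re) hS
  simp only [Matrix.mul_apply, Matrix.one_apply_eq, Complex.re_sum, Matrix.star_apply,
    Complex.one_re] at h
  rw [← h]
  congr 1; ext j
  simp [Complex.normSq_apply, Complex.mul_re]

lemma row_normSq_sum (S : Matrix (Fin d) (Fin d) ℂ) (hS : S * star S = 1) (j : Fin d) :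
    ∑ i, Complex.normSq (S j i) = 1 := by
  have h := congrArg (fun M : Matrix (Fin d) (Fin d) ℂ => (M j j).re) hS
  simp only [Matrix.mul_apply, Matrix.one_apply_eq, Complex.re_sum, Matrix.star_apply,
    Complex.one_re] at h
  rw [← h]
  congr 1; ext i
  simp [Complex.normSq_apply, Complex.mul_re]

lemma qform_eq {M : Matrix (Fin d) (Fin d) ℂ} (hM : M.IsHermitian)
    (U : Matrix.unitaryGroup (Fin d) ℂ) (i : Fin d) :
    ((star (U : Matrix (Fin d) (Fin d) ℂ) * M * U) i i).re
      = ∑ j, Complex.normSq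
          ((star (hM.eigenvectorUnitary : Matrix (Fin d) (Fin d) ℂ) * U) j i)
          * hM.eigenvalues j := by
  set V := (hM.eigenvectorUnitary : Matrix (Fin d) (Fin d) ℂ)
  set S := star V * (U : Matrix (Fin d) (Fin d) ℂ) with hSdef
  have key : star (U : Matrix (Fin d) (Fin d) ℂ) * M * U
      = star S * diagonal ((RCLike.ofReal : ℝ → ℂ) ∘ hM.eigenvalues) * S := by
    conv_lhs => rw [hM.spectral_theorem]
    rw [hSdef, StarMul.star_mul, star_star]
    simp only [Unitary.conjStarAlgAut_apply, mul_assoc]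
    rfl
  rw [key, conj_diag_entry']

lemma key_concave {A B C : Matrix (Fin d) (Fin d) ℂ} (hA : A.PosSemidef) (hB : B.PosSemidef)
    (hC : C.PosSemidef) {a b : ℝ} (ha : 0 ≤ a) (hb : 0 ≤ b) (hab : a + b = 1)
    (hCab : C = (a : ℂ) • A + (b : ℂ) • B) {f : ℝ → ℝ}
    (hf : ConcaveOn ℝ (Set.Ici 0) f) :
    a * (Matrix.trace (cfc f A)).re + b * (Matrix.trace (cfc f B)).re
      ≤ (Matrix.trace (cfc f C)).re := by
  set U := hC.1.eigenvectorUnitary with hU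
  set q : Matrix (Fin d) (Fin d) ℂ → Fin d → ℝ :=
    fun M i => ((star (U : Matrix (Fin d) (Fin d) ℂ) * M * U) i i).re with hq
  have hqC : ∀ i, q C i = hC.1.eigenvalues i := by
    intro i
    show ((star (U : Matrix (Fin d) (Fin d) ℂ) * C * U) i i).re = _
    rw [qform_eq hC.1 U i]
    rw [show star (hC.1.eigenvectorUnitary : Matrix (Fin d) (Fin d) ℂ)
        * (U : Matrix (Fin d) (Fin d) ℂ) = 1 from ustar_mul U]
    rw [Finset.sum_eq_single i (by
      intro k _ hk
      rw [Matrix.one_apply_ne hk]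
      simp) (by simp)]
    simp [Matrix.one_apply_eq]
  have hqlin : ∀ i, q C i = a * q A i + b * q B i := by
    intro i
    show ((star (U : Matrix (Fin d) (Fin d) ℂ) * C * U) i i).re
      = a * ((star (U : Matrix (Fin d) (Fin d) ℂ) * A * U) i i).re
      + b * ((star (U : Matrix (Fin d) (Fin d) ℂ) * B * U) i i).re
    simp only [hCab, Matrix.mul_add, Matrix.add_mul, Matrix.mul_smul, Matrix.smul_mul,
      Matrix.add_apply, Matrix.smul_apply, smul_eq_mul, Complex.add_re, Complex.mul_re,
      Complex.ofReal_re, Complex.ofReal_im]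
    ring
  have peierls : ∀ (M : Matrix (Fin d) (Fin d) ℂ) (hM : M.PosSemidef),
      (∀ i, 0 ≤ q M i) ∧ (Matrix.trace (cfc f M)).re ≤ ∑ i, f (q M i) := by
    intro M hM
    set S := star (hM.1.eigenvectorUnitary : Matrix (Fin d) (Fin d) ℂ)
        * (U : Matrix (Fin d) (Fin d) ℂ) with hS
    have hS1 : star S * S = 1 := by
      rw [hS, StarMul.star_mul, star_star, mul_assoc,
        ← mul_assoc _ _ ((U : Matrix (Fin d) (Fin d) ℂ)), umul_star, one_mul, ustar_mul]
    have hS2 : S * star S = 1 := by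
      rw [hS, StarMul.star_mul, star_star, mul_assoc,
        ← mul_assoc ((U : Matrix (Fin d) (Fin d) ℂ)), umul_star, one_mul, ustar_mul]
    have hqM : ∀ i, q M i = ∑ j, Complex.normSq (S j i) * hM.1.eigenvalues j :=
      fun i => qform_eq hM.1 U i
    have hwnn : ∀ i j, (0:ℝ) ≤ Complex.normSq (S j i) := fun i j => Complex.normSq_nonneg _
    have hev : ∀ j, (0:ℝ) ≤ hM.1.eigenvalues j := hM.eigenvalues_nonneg
    constructor
    · intro i
      rw [hqM i]
      exact Finset.sum_nonneg fun j _ => mul_nonneg (hwnn i j) (hev j)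
    · rw [trace_cfc_eq hM.1]
      calc ∑ j, f (hM.1.eigenvalues j)
          = ∑ j, (∑ i, Complex.normSq (S j i)) * f (hM.1.eigenvalues j) := by
            congr 1; ext j; rw [row_normSq_sum S hS2, one_mul]
        _ = ∑ i, ∑ j, Complex.normSq (S j i) * f (hM.1.eigenvalues j) := by
            rw [Finset.sum_comm]
            congr 1; ext j; rw [Finset.sum_mul]
        _ ≤ ∑ i, f (q M i) := by
            apply Finset.sum_le_sum
            intro i _
            have := hf.le_map_sum (t := Finset.univ)
              (w := fun j => Complex.normSq (S j i)) (p := hM.1.eigenvalues)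
              (fun j _ => hwnn i j) (col_normSq_sum S hS1 i)
              (fun j _ => hev j)
            rw [hqM i]
            simpa [smul_eq_mul] using this
  obtain ⟨hAnn, hAle⟩ := peierls A hA
  obtain ⟨hBnn, hBle⟩ := peierls B hB
  have main : ∑ i, (a * f (q A i) + b * f (q B i)) ≤ (Matrix.trace (cfc f C)).re := by
    rw [trace_cfc_eq hC.1]
    apply Finset.sum_le_sum
    intro i _
    have := hf.2 (hAnn i) (hBnn i) ha hb hab
    rw [← hqC i, hqlin i]
    simpa [smul_eq_mul] using this
  calc a * (Matrix.trace (cfc f A)).re + b * (Matrix.trace (cfc f B)).re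
      ≤ a * (∑ i, f (q A i)) + b * (∑ i, f (q B i)) := by
        gcongr
    _ = ∑ i, (a * f (q A i) + b * f (q B i)) := by
        rw [Finset.sum_add_distrib, Finset.mul_sum, Finset.mul_sum]
    _ ≤ _ := main

lemma key_convex {A B C : Matrix (Fin d) (Fin d) ℂ} (hA : A.PosSemidef) (hB : B.PosSemidef)
    (hC : C.PosSemidef) {a b : ℝ} (ha : 0 ≤ a) (hb : 0 ≤ b) (hab : a + b = 1)
    (hCab : C = (a : ℂ) • A + (b : ℂ) • B) {f : ℝ → ℝ}
    (hf : ConvexOn ℝ (Set.Ici 0) f) :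
    (Matrix.trace (cfc f C)).re
      ≤ a * (Matrix.trace (cfc f A)).re + b * (Matrix.trace (cfc f B)).re := by
  have hneg : ConcaveOn ℝ (Set.Ici 0) (fun x : ℝ => -f x) :=
    neg_concaveOn_iff.mpr hf
  have h := key_concave hA hB hC ha hb hab hCab hneg
  rw [cfc_neg, cfc_neg, cfc_neg] at h
  simp only [Matrix.trace_neg, Complex.neg_re, mul_neg] at h
  linarith

lemma mpow_posSemidef {A : Matrix (Fin d) (Fin d) ℂ} (hA : A.PosSemidef) (r : ℝ) :
    (mpow A r).PosSemidef := by
  rw [mpow, hA.1.cfc_eq, Matrix.IsHermitian.cfc, Unitary.conjStarAlgAut_apply]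
  rw [show star (hA.1.eigenvectorUnitary : Matrix (Fin d) (Fin d) ℂ)
      = (hA.1.eigenvectorUnitary : Matrix (Fin d) (Fin d) ℂ)ᴴ from rfl]
  apply Matrix.PosSemidef.mul_mul_conjTranspose_same
  refine posSemidef_diagonal_iff.mpr fun i => ?_
  rw [Function.comp_apply, Function.comp_apply, RCLike.nonneg_iff]
  constructor
  · simp only [RCLike.ofReal_re]
    exact Real.rpow_nonneg (hA.eigenvalues_nonneg i) r
  · simp only [RCLike.ofReal_im]

lemma smul_posSemidef {A : Matrix (Fin d) (Fin d) ℂ} (hA : A.PosSemidef) {c : ℝ}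
    (hc : 0 ≤ c) : ((c : ℂ) • A).PosSemidef := by
  constructor
  · show ((c:ℂ) • A)ᴴ = (c:ℂ) • A
    rw [conjTranspose_smul, hA.1.eq]
    norm_num
  · intro x
    exact (hA.smul (by exact_mod_cast Complex.zero_le_real.mpr hc : (0:ℂ) ≤ (c:ℂ))).2 x

lemma sum_posSemidef {X : Type*} [Fintype X] (M : X → Matrix (Fin d) (Fin d) ℂ)
    (hM : ∀ x, (M x).PosSemidef) (p : X → ℝ) (hp : ∀ x, 0 ≤ p x) :
    (∑ x, (p x : ℂ) • M x).PosSemidef := by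
  classical
  induction (Finset.univ : Finset X) using Finset.induction_on with
  | empty => simpa using Matrix.PosSemidef.zero
  | insert _ _ h ih =>
    rw [Finset.sum_insert h]
    exact (smul_posSemidef (hM _) (hp _)).add ih

end Aux

/-- `p ↦ exp(φ(s|W,p)) = Tr[(∑_x p(x) W_x^{1/(1-s)})^{1-s}]` is concave on the probability
simplex for `s ∈ [0,1]` and convex for `s ∈ [-1,0]`. -/
theorem exp_phi_concave_convex {X : Type*} [Fintype X] {d : ℕ}
    (W : X → Matrix (Fin d) (Fin d) ℂ)
    (hW : ∀ x, (W x).PosSemidef) (hWtr : ∀ x, Matrix.trace (W x) = 1) (s : ℝ) :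
    (s ∈ Set.Icc (0:ℝ) 1 →
      ConcaveOn ℝ (stdSimplex ℝ X) (fun p : X → ℝ =>
        (Matrix.trace (mpow (∑ x, (p x : ℂ) • mpow (W x) (1/(1-s))) (1-s))).re)) ∧
    (s ∈ Set.Icc (-1:ℝ) 0 →
      ConvexOn ℝ (stdSimplex ℝ X) (fun p : X → ℝ =>
        (Matrix.trace (mpow (∑ x, (p x : ℂ) • mpow (W x) (1/(1-s))) (1-s))).re)) := by
  have hMpsd : ∀ x, (mpow (W x) (1/(1-s))).PosSemidef := fun x => mpow_posSemidef (hW x) _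
  have hcomb : ∀ (p q : X → ℝ) (a b : ℝ),
      (∑ x, (((a • p + b • q) x : ℝ) : ℂ) • mpow (W x) (1/(1-s)))
        = (a : ℂ) • (∑ x, ((p x : ℝ) : ℂ) • mpow (W x) (1/(1-s))) + (b : ℂ) • (∑ x, ((q x : ℝ) : ℂ) • mpow (W x) (1/(1-s))) := by
    intro p q a b
    rw [Finset.smul_sum, Finset.smul_sum, ← Finset.sum_add_distrib]
    congr 1; ext x
    simp only [Pi.add_apply, Pi.smul_apply, smul_eq_mul, Complex.ofReal_add,
      Complex.ofReal_mul, add_smul, smul_smul]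
  constructor
  · intro hs
    have hf : ConcaveOn ℝ (Set.Ici 0) (fun x : ℝ => x ^ (1-s)) :=
      Real.concaveOn_rpow (by linarith [hs.2]) (by linarith [hs.1])
    refine ⟨convex_stdSimplex ℝ X, ?_⟩
    intro p hp q hq a b ha hb hab
    have hA := sum_posSemidef _ hMpsd p fun x => hp.1 x
    have hB := sum_posSemidef _ hMpsd q fun x => hq.1 x
    have hC : (∑ x, (((a • p + b • q) x : ℝ) : ℂ) • mpow (W x) (1/(1-s))).PosSemidef := by
      rw [hcomb]
      exact (smul_posSemidef hA ha).add (smul_posSemidef hB hb)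
    have := key_concave hA hB hC ha hb hab (hcomb p q a b) hf
    simpa [mpow, Pi.add_apply, Pi.smul_apply, smul_eq_mul, Complex.ofReal_add, Complex.ofReal_mul] using this
  · intro hs
    have hf : ConvexOn ℝ (Set.Ici 0) (fun x : ℝ => x ^ (1-s)) :=
      convexOn_rpow (by linarith [hs.2])
    refine ⟨convex_stdSimplex ℝ X, ?_⟩
    intro p hp q hq a b ha hb hab
    have hA := sum_posSemidef _ hMpsd p fun x => hp.1 x
    have hB := sum_posSemidef _ hMpsd q fun x => hq.1 x
    have hC : (∑ x, (((a • p + b • q) x : ℝ) : ℂ) • mpow (W x) (1/(1-s))).PosSemidef := by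
      rw [hcomb]
      exact (smul_posSemidef hA ha).add (smul_posSemidef hB hb)
    have := key_convex hA hB hC ha hb hab (hcomb p q a b) hf
    simpa [mpow, Pi.add_apply, Pi.smul_apply, smul_eq_mul, Complex.ofReal_add, Complex.ofReal_mul] using this
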